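/- Let c₁,…,c_{n-1} ≥ 0, c₀ := -∑_{i≥1} c_i < 0, and c_J := ∏_{i∈J} c_i for J ⊆ {0,…,n-1}. For n ≥ 5, the inequality ∑_{K ∋ 0, |K|=5, K ⊇ J} ε_J |c_K| / |c₀| ≤ -c_J holds for every 4-element subset J of {0,…,n-1}, where ε_J = 1 if 0 ∈ J and ε_J = -1 otherwise. -/

import Mathlib

open Finset

/-- With `c i ≥ 0` for `i ≠ 0` and `c 0 = -∑_{i≠0} c i < 0`, for every 4-element
subset `J` of `{0,…,n-1}` (`n ≥ 5`):
`∑_{K ∋ 0, |K| = 5, K ⊇ J} ε_J |c_K| / |c_0| ≤ -c_J`, where `c_S = ∏_{i∈S} c i` and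
`ε_J = 1` if `0 ∈ J`, `ε_J = -1` otherwise. -/
theorem coefficient_inequality (n : ℕ) [NeZero n] (hn : 5 ≤ n)
    (c : Fin n → ℝ) (hc : ∀ i, i ≠ 0 → 0 ≤ c i)
    (hc0 : c 0 = -∑ i ∈ univ.erase 0, c i) (hc0neg : c 0 < 0)
    (J : Finset (Fin n)) (hJ : J.card = 4) :
    ∑ K ∈ (univ.powersetCard 5).filter (fun K => (0 : Fin n) ∈ K ∧ J ⊆ K),
        (if (0 : Fin n) ∈ J then (1 : ℝ) else -1) * |∏ i ∈ K, c i| / |c 0| ≤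
      -∏ i ∈ J, c i := by
  have habs0 : |c 0| = -c 0 := abs_of_neg hc0neg
  have h0pos : (0 : ℝ) < |c 0| := abs_pos.mpr hc0neg.ne
  by_cases h0 : (0 : Fin n) ∈ J
  · simp only [h0, if_true, one_mul]
    have hprodJ : ∏ i ∈ J, c i ≤ 0 := by
      rw [← Finset.prod_erase_mul J c h0]
      exact mul_nonpos_of_nonneg_of_nonpos
        (Finset.prod_nonneg fun i hi => hc i (Finset.ne_of_mem_erase hi)) hc0neg.le
    have hA : |∏ i ∈ J, c i| = -∏ i ∈ J, c i := abs_of_nonpos hprodJ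
    have hbij : ((univ.powersetCard 5).filter (fun K => (0 : Fin n) ∈ K ∧ J ⊆ K)) =
        Jᶜ.image (fun j => insert j J) := by
      ext K
      simp only [mem_filter, mem_powersetCard, mem_image, mem_compl]
      constructor
      · rintro ⟨⟨-, hK5⟩, hK0, hJK⟩
        obtain ⟨j, hj⟩ := Finset.card_eq_one.mp
          (by rw [Finset.card_sdiff_of_subset hJK, hK5, hJ] : (K \ J).card = 1)
        have hjK : j ∈ K \ J := hj ▸ Finset.mem_singleton_self j
        refine ⟨j, (Finset.mem_sdiff.mp hjK).2, ?_⟩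
        have : J ∪ (K \ J) = K := Finset.union_sdiff_of_subset hJK
        rw [hj] at this
        rw [← this, Finset.union_comm, ← Finset.insert_eq]
      · rintro ⟨j, hjJ, rfl⟩
        exact ⟨⟨Finset.subset_univ _,
          by rw [Finset.card_insert_of_notMem hjJ, hJ]⟩,
          Finset.mem_insert_of_mem h0, Finset.subset_insert _ _⟩
    rw [hbij, Finset.sum_image (by
      intro a ha b hb hab
      have : a ∈ insert b J := (show insert a J = insert b J from hab) ▸ Finset.mem_insert_self a J
      rcases Finset.mem_insert.mp this with h | h
      · exact h
      · exact absurd h (Finset.mem_compl.mp ha))]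
    have hterm : ∀ j ∈ Jᶜ, |∏ i ∈ insert j J, c i| / |c 0|
        = c j * (|∏ i ∈ J, c i| / |c 0|) := by
      intro j hj
      have hjJ : j ∉ J := Finset.mem_compl.mp hj
      have hjne : j ≠ 0 := fun h => hjJ (h ▸ h0)
      rw [Finset.prod_insert hjJ, abs_mul, abs_of_nonneg (hc j hjne), mul_div_assoc]
    rw [Finset.sum_congr rfl hterm, ← Finset.sum_mul]
    have hsum : ∑ j ∈ Jᶜ, c j ≤ |c 0| := by
      rw [habs0, hc0, neg_neg]
      refine Finset.sum_le_sum_of_subset_of_nonneg ?_ ?_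
      · intro j hj
        exact Finset.mem_erase.mpr ⟨fun h => (Finset.mem_compl.mp hj) (h ▸ h0),
          Finset.mem_univ j⟩
      · intro i hi _
        exact hc i (Finset.ne_of_mem_erase hi)
    calc (∑ j ∈ Jᶜ, c j) * (|∏ i ∈ J, c i| / |c 0|)
        ≤ |c 0| * (|∏ i ∈ J, c i| / |c 0|) := by
          apply mul_le_mul_of_nonneg_right hsum
          positivity
      _ = |∏ i ∈ J, c i| := by field_simp
      _ = -∏ i ∈ J, c i := hA
  · simp only [h0, if_false]
    have hPnn : 0 ≤ ∏ i ∈ J, c i :=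
      Finset.prod_nonneg fun i hi => hc i (fun h => h0 (h ▸ hi))
    have hone : ((univ.powersetCard 5).filter (fun K => (0 : Fin n) ∈ K ∧ J ⊆ K)) =
        {insert 0 J} := by
      ext K
      simp only [mem_filter, mem_powersetCard, mem_singleton]
      constructor
      · rintro ⟨⟨-, hK5⟩, hK0, hJK⟩
        have hsub : insert 0 J ⊆ K := Finset.insert_subset hK0 hJK
        have hcard : (insert 0 J).card = 5 := by
          rw [Finset.card_insert_of_notMem h0, hJ]
        exact (Finset.eq_of_subset_of_card_le hsub (by rw [hK5, hcard])).symm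
      · rintro rfl
        exact ⟨⟨Finset.subset_univ _,
          by rw [Finset.card_insert_of_notMem h0, hJ]⟩,
          Finset.mem_insert_self _ _, Finset.subset_insert _ _⟩
    rw [hone, Finset.sum_singleton, Finset.prod_insert h0, abs_mul,
      abs_of_nonneg hPnn]
    rw [neg_one_mul, neg_div, mul_comm, mul_div_assoc, div_self h0pos.ne',
      mul_one]
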